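/- Let U ⊆ ℂ be open and convex, let 0 < δ < 1/4, let ψ : U → ℂ be holomorphic with |ψ(z) − 1| < δ for all z ∈ U, let g : U → ℂ be the principal square root of ψ, and let G : U → ℂ be a primitive of g (i.e., G is differentiable with deriv G = g on U). Then for all p, q ∈ U: |(G(p) − G(q)) − (p − q)| ≤ δ·|p − q|; consequently (1 − δ)|p − q| ≤ |G(p) − G(q)| ≤ (1 + δ)|p − q| for all p, q ∈ U, the map G is injective on U, and |p − q| > (4/5)·|G(p) − G(q)| whenever p ≠ q. -/

import Mathlib

/-- `g` is the principal square root of `ψ` on `U`: it is holomorphic on `U`, with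
`g² = ψ` and `Re g > 0` on `U`. -/
def IsPrincipalSqrtOn (U : Set ℂ) (ψ g : ℂ → ℂ) : Prop :=
  DifferentiableOn ℂ g U ∧ ∀ z ∈ U, g z ^ 2 = ψ z ∧ 0 < (g z).re

/-- Parts (i)–(ii) of Lemma 2.5 of the paper, in the planar model: if `ψ` is
holomorphic on an open convex set `U` with `|ψ − 1| < δ < 1/4` on `U`, `g` is the
principal square root of `ψ`, and `G` is a primitive of `g` on `U`, then
`|(G p − G q) − (p − q)| ≤ δ|p − q|`; consequently
`(1 − δ)|p − q| ≤ |G p − G q| ≤ (1 + δ)|p − q|`, `G` is injective on `U`, and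
`|p − q| > (4/5)|G p − G q|` for distinct `p, q ∈ U`. -/
theorem natural_coordinate_estimates (U : Set ℂ) (hU : IsOpen U) (hconv : Convex ℝ U)
    (δ : ℝ) (hδ0 : 0 < δ) (hδ : δ < 1 / 4) (ψ g G : ℂ → ℂ)
    (hψ : DifferentiableOn ℂ ψ U)
    (hψb : ∀ z ∈ U, ‖ψ z - 1‖ < δ)
    (hg : IsPrincipalSqrtOn U ψ g)
    (hG : ∀ z ∈ U, HasDerivAt G (g z) z) :
    (∀ p ∈ U, ∀ q ∈ U,
      ‖(G p - G q) - (p - q)‖ ≤ δ * ‖p - q‖) ∧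
    (∀ p ∈ U, ∀ q ∈ U,
      (1 - δ) * ‖p - q‖ ≤ ‖G p - G q‖ ∧
      ‖G p - G q‖ ≤ (1 + δ) * ‖p - q‖) ∧
    Set.InjOn G U ∧
    (∀ p ∈ U, ∀ q ∈ U, p ≠ q →
      ‖p - q‖ > (4 / 5) * ‖G p - G q‖) := by
  obtain ⟨hgdiff, hgprop⟩ := hg
  -- key bound: |g z - 1| ≤ δ on U
  have hgb : ∀ z ∈ U, ‖g z - 1‖ ≤ δ := by
    intro z hz
    obtain ⟨hsq, hre⟩ := hgprop z hz
    have h1 : ‖g z + 1‖ ≥ 1 := by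
      have : (1 : ℝ) ≤ (g z + 1).re := by
        simp [Complex.add_re]
        linarith
      calc (1 : ℝ) ≤ (g z + 1).re := this
        _ ≤ ‖g z + 1‖ := Complex.re_le_norm _
    have h2 : ‖g z - 1‖ * ‖g z + 1‖ < δ := by
      rw [← norm_mul]
      have : (g z - 1) * (g z + 1) = ψ z - 1 := by rw [← hsq]; ring
      rw [this]
      exact hψb z hz
    nlinarith [norm_nonneg (g z - 1), norm_nonneg (g z + 1)]
  -- main estimate via MVT on F = G - id
  have main : ∀ p ∈ U, ∀ q ∈ U,
      ‖(G p - G q) - (p - q)‖ ≤ δ * ‖p - q‖ := by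
    intro p hp q hq
    have key := Convex.norm_image_sub_le_of_norm_hasDerivWithin_le
      (f := fun z => G z - z) (f' := fun z => g z - 1) (C := δ) (s := U)
      (fun z hz => (((hG z hz).sub (hasDerivAt_id z)).hasDerivWithinAt))
      (fun z hz => hgb z hz) hconv hq hp
    simpa [sub_sub_sub_comm] using key
  have bounds : ∀ p ∈ U, ∀ q ∈ U,
      (1 - δ) * ‖p - q‖ ≤ ‖G p - G q‖ ∧
      ‖G p - G q‖ ≤ (1 + δ) * ‖p - q‖ := by
    intro p hp q hq
    have h := main p hp q hq
    have t1 : ‖p - q‖ - ‖(G p - G q) - (p - q)‖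
        ≤ ‖G p - G q‖ := by
      have h1 := norm_sub_norm_le (p - q) ((p - q) - (G p - G q))
      have h2 : ‖(p - q) - (G p - G q)‖
          = ‖(G p - G q) - (p - q)‖ := norm_sub_rev _ _
      simpa [sub_sub_cancel, h2] using h1
    have t2 : ‖G p - G q‖
        ≤ ‖(G p - G q) - (p - q)‖ + ‖p - q‖ := by
      have := norm_add_le ((G p - G q) - (p - q)) (p - q)
      simpa using this
    constructor
    · nlinarith
    · nlinarith
  refine ⟨main, bounds, ?_, ?_⟩
  · intro p hp q hq hpq
    have h := (bounds p hp q hq).1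
    rw [hpq] at h
    simp at h
    have hδ1 : (0:ℝ) < 1 - δ := by linarith
    have : ‖p - q‖ ≤ 0 := by nlinarith [norm_nonneg (p - q)]
    have : p - q = 0 := by
      have := norm_nonneg (p - q)
      have h0 : ‖p - q‖ = 0 := le_antisymm ‹_› this
      exact norm_eq_zero.mp h0
    exact sub_eq_zero.mp this
  · intro p hp q hq hne
    have h := (bounds p hp q hq).2
    have hpos : 0 < ‖p - q‖ := by
      simpa [norm_pos_iff, sub_eq_zero] using hne
    nlinarith
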